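/- Let m_1,…,m_t be monomials with m_i ∈ S_i = K[x_i,…,x_n] for each i and deg m_t > 0, where 1 ≤ t ≤ n. Then, as K-vector spaces, S = ⊕_{i=1}^{t} ⊕_{j=1}^{d_i} u_{ij} n_i K[Z_{ij}] ⊕ ⊕_{j=1}^{t−1} x_j n_{j+1} S_j ⊕ n_t m_t S_t, an internal direct sum of K-subspaces of S, where for a monomial u the set u S_j = {u f : f ∈ S_j}. -/

import Mathlib

open MvPolynomial

noncomputable section

variable (K : Type*) [Field K]

/-- The set of monomials (with coefficient 1) whose variables lie in `Z`. -/
def monomialsIn {σ : Type*} (Z : Set σ) : Set (MvPolynomial σ K) :=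
  {p | ∃ a : σ →₀ ℕ, ↑a.support ⊆ Z ∧ p = monomial a 1}

/-- `u K[Z]` : the `K`-linear span of the polynomials `u * v`, `v` a monomial in `Z`. -/
def stanleySpace {σ : Type*} (u : MvPolynomial σ K) (Z : Set σ) :
    Submodule K (MvPolynomial σ K) :=
  Submodule.span K ((u * ·) '' monomialsIn K Z)


/-- The generators `x₁m₁, x₂m₁m₂, …, x_{t-1}m₁⋯m_{t-1}, m₁⋯m_t` (0-indexed) of the
canonical critical monomial ideal `I_{(m₁,…,m_t)}`; here `ccGens K ht m j = x_j n_{j+1}`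
for `j < t - 1` (0-indexed) and `ccGens K ht m (t-1) = n_t m_t`. -/
def ccGens {n t : ℕ} (ht : t ≤ n) (m : Fin t → MvPolynomial (Fin n) K) (j : Fin t) :
    MvPolynomial (Fin n) K :=
  (if (j : ℕ) < t - 1 then X (Fin.castLE ht j) else 1) * ∏ k ∈ Finset.Iic j, m k

/-- The variables (with multiplicity, in increasing order) of the monomial with exponent
vector `a`; its `j`-th entry (0-indexed) is the variable `v(w_{j+1})` of the paper. -/
def varList {n : ℕ} (a : Fin n →₀ ℕ) : List (Fin n) :=
  (Finsupp.toMultiset a).sort (· ≤ ·)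

/-- `u_{j+1}` : the product of the first `j` variables (with multiplicity, in increasing
order) of the monomial with exponent vector `a`; `u_1 = 1`. -/
def uPoly (K : Type*) [Field K] {n : ℕ} (a : Fin n →₀ ℕ) (j : ℕ) : MvPolynomial (Fin n) K :=
  (((varList a).take j).map X).prod

/-- `Z_{i,j+1} = {x_i,…,x_n} \ {x_{v(w_{i,j+1})}}` (0-indexed in `i` and `j`),
for the monomial `m_i` with exponent vector `a`. -/
def Zij {n : ℕ} (i : ℕ) (a : Fin n →₀ ℕ) (j : Fin (varList a).length) : Set (Fin n) :=
  {k : Fin n | i ≤ (k : ℕ)} \ {(varList a).get j}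


namespace StanleyAux

open MvPolynomial

/-! ### Counting in prefixes of lists -/

lemma count_take_succ {σ : Type*} [DecidableEq σ] (L : List σ) {j : ℕ} (hj : j < L.length)
    (x : σ) :
    (L.take (j + 1)).count x = (L.take j).count x + (if L.get ⟨j, hj⟩ = x then 1 else 0) := by
  rw [List.take_succ, List.count_append]
  congr 1
  rw [List.getElem?_eq_getElem hj]
  simp only [Option.toList_some, List.count_singleton']
  rfl

lemma count_take_mono {σ : Type*} [DecidableEq σ] (L : List σ) {j j' : ℕ} (h : j ≤ j') (x : σ) :
    (L.take j).count x ≤ (L.take j').count x := by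
  have hs : (L.take j').take j = L.take j := by rw [List.take_take, min_eq_left h]
  rw [← hs]
  exact (List.take_sublist _ _).count_le x

lemma count_take_le {σ : Type*} [DecidableEq σ] (L : List σ) (j : ℕ) (x : σ) :
    (L.take j).count x ≤ L.count x :=
  (List.take_sublist _ _).count_le x

/-- the key combinatorial lemma: if the monomial `r` is not divisible by the monomial whose
variables (with multiplicity) are listed in `L`, then there is a unique cut position `j`. -/
lemma existsUnique_cut {σ : Type*} [DecidableEq σ] (L : List σ) (r : σ → ℕ)
    (h : ∃ x, r x < L.count x) :
    ∃! j : Fin L.length,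
      (∀ x, (L.take (j : ℕ)).count x ≤ r x) ∧
        r (L.get j) = (L.take (j : ℕ)).count (L.get j) := by
  classical
  have hlen : 0 < L.length := by
    rcases h with ⟨x, hx⟩
    rcases Nat.eq_zero_or_pos L.length with h0 | h0
    · rw [List.length_eq_zero_iff] at h0; subst h0; simp at hx
    · exact h0
  have hex : ∃ k, ∃ x, r x < (L.take (k + 1)).count x := by
    obtain ⟨x, hx⟩ := h
    exact ⟨L.length - 1, x, by rwa [Nat.sub_add_cancel hlen, List.take_length]⟩
  set j := Nat.find hex with hjdef
  have hj1 : ∃ x, r x < (L.take (j + 1)).count x := Nat.find_spec hex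
  have hmin : ∀ k, k < j → ∀ x, (L.take (k + 1)).count x ≤ r x := by
    intro k hk x
    by_contra hcon
    exact Nat.find_min hex hk ⟨x, by omega⟩
  have hle : ∀ x, (L.take j).count x ≤ r x := by
    intro x
    rcases Nat.eq_zero_or_pos j with h0 | h0
    · simp [h0]
    · have := hmin (j - 1) (by omega) x
      rwa [Nat.sub_add_cancel h0] at this
  have hjlen : j < L.length := by
    by_contra hcon
    push_neg at hcon
    have h1 := hmin (L.length - 1) (by omega)
    rw [Nat.sub_add_cancel hlen, List.take_length] at h1
    obtain ⟨x, hx⟩ := h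
    exact absurd (h1 x) (by omega)
  obtain ⟨x, hx⟩ := hj1
  have hgx : L.get ⟨j, hjlen⟩ = x := by
    by_contra hne
    rw [count_take_succ L hjlen] at hx
    simp only [hne, if_false, add_zero] at hx
    exact absurd hx (not_lt.2 (hle x))
  have heq : r (L.get ⟨j, hjlen⟩) = (L.take j).count (L.get ⟨j, hjlen⟩) := by
    rw [hgx]
    have h1 := count_take_succ L hjlen x
    rw [hgx, if_pos rfl] at h1
    have := hle x
    omega
  have key : ∀ j1 j2 : Fin L.length, (j1 : ℕ) < (j2 : ℕ) →
      r (L.get j1) = (L.take (j1 : ℕ)).count (L.get j1) →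
      (∀ y, (L.take (j2 : ℕ)).count y ≤ r y) → False := by
    intro j1 j2 hlt hb1 ha2
    have h1 := count_take_succ L j1.isLt (L.get j1)
    rw [if_pos rfl] at h1
    have h2 : (L.take ((j1 : ℕ) + 1)).count (L.get j1) ≤ (L.take (j2 : ℕ)).count (L.get j1) :=
      count_take_mono L hlt (L.get j1)
    have h3 := ha2 (L.get j1)
    omega
  refine ⟨⟨j, hjlen⟩, ⟨hle, heq⟩, ?_⟩
  rintro j' ⟨h1', h2'⟩
  rcases lt_trichotomy (j' : ℕ) j with hlt | heq' | hlt
  · exact absurd (key j' ⟨j, hjlen⟩ hlt h2' hle) not_false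
  · exact Fin.ext heq'
  · exact absurd (key ⟨j, hjlen⟩ j' hlt heq h1') not_false

/-- in a cut position, the exponent is strictly smaller than the full count. -/
lemma cut_lt {σ : Type*} [DecidableEq σ] (L : List σ) (r : σ → ℕ) (j : Fin L.length)
    (h2 : r (L.get j) = (L.take (j : ℕ)).count (L.get j)) :
    r (L.get j) < L.count (L.get j) := by
  have h1 := count_take_succ L j.isLt (L.get j)
  rw [if_pos rfl] at h1
  have h3 : (L.take ((j : ℕ) + 1)).count (L.get j) ≤ L.count (L.get j) :=
    count_take_le L _ _
  omega

/-! ### Monomial computations -/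

variable {K : Type*} [Field K]

lemma prod_monomial {σ ι : Type*} (s : Finset ι) (f : ι → (σ →₀ ℕ)) :
    (∏ k ∈ s, (monomial (f k) (1 : K))) = monomial (∑ k ∈ s, f k) 1 := by
  classical
  induction s using Finset.induction_on with
  | empty => simp
  | insert _ _ h ih =>
    rw [Finset.prod_insert h, Finset.sum_insert h, ih, monomial_mul, one_mul]

lemma listProd_X {σ : Type*} [DecidableEq σ] (l : List σ) :
    ((l.map X).prod : MvPolynomial σ K) = monomial (Multiset.toFinsupp (l : Multiset σ)) 1 := by
  induction l with
  | nil => simp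
  | cons x l ih =>
    rw [List.map_cons, List.prod_cons, ih]
    have hms : (Multiset.toFinsupp ((x :: l : List σ) : Multiset σ))
        = Finsupp.single x 1 + Multiset.toFinsupp (l : Multiset σ) := by
      ext y
      simp only [Multiset.toFinsupp_apply, Finsupp.add_apply, Finsupp.single_apply, ← Multiset.cons_coe,
        Multiset.count_cons]
      split_ifs with h1 h2 h2 <;> first | omega | (exfalso; first | exact h2 h1.symm | exact h1 h2.symm)
    rw [hms, X, monomial_mul, mul_one]

lemma mem_shift_iff {σ : Type*} (e b : σ →₀ ℕ) (Z : Set σ) :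
    b ∈ (e + ·) '' {c : σ →₀ ℕ | ↑c.support ⊆ Z} ↔
      (∀ x, e x ≤ b x) ∧ ∀ x ∉ Z, b x = e x := by
  constructor
  · rintro ⟨c, hc, rfl⟩
    refine ⟨fun x => by simp, fun x hx => ?_⟩
    have hcx : c x = 0 := by
      by_contra hne
      exact hx (hc (Finsupp.mem_support_iff.2 hne))
    simp [Finsupp.add_apply, hcx]
  · rintro ⟨hle, heq⟩
    refine ⟨b - e, fun x hx => ?_, ?_⟩
    · by_contra hxZ
      have := heq x hxZ
      simp only [Finset.mem_coe, Finsupp.mem_support_iff, Finsupp.tsub_apply] at hx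
      omega
    · exact add_tsub_cancel_of_le (Finsupp.le_def.2 hle)

lemma image_mul_monomialsIn {σ : Type*} (e : σ →₀ ℕ) (Z : Set σ) :
    ((monomial e (1 : K)) * ·) '' monomialsIn K Z
      = (fun b => monomial b (1 : K)) '' ((e + ·) '' {c : σ →₀ ℕ | ↑c.support ⊆ Z}) := by
  ext p
  simp only [monomialsIn, Set.mem_image, Set.mem_setOf_eq]
  constructor
  · rintro ⟨q, ⟨c, hc, rfl⟩, rfl⟩
    exact ⟨e + c, ⟨c, hc, rfl⟩, by rw [monomial_mul, mul_one]⟩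
  · rintro ⟨b, ⟨c, hc, rfl⟩, rfl⟩
    exact ⟨monomial c 1, ⟨c, hc, rfl⟩, by rw [monomial_mul, mul_one]⟩

/-- direct sum from a partition of the exponent set. -/
lemma indep_top {σ ι : Type*} (Bs : ι → Set (σ →₀ ℕ))
    (huniq : ∀ b : σ →₀ ℕ, ∃! o, b ∈ Bs o) :
    iSupIndep (fun o => Submodule.span K ((fun b => monomial b (1 : K)) '' Bs o)) ∧
      (⨆ o, Submodule.span K ((fun b => monomial b (1 : K)) '' Bs o)) = ⊤ := by
  have hli : LinearIndependent K (fun b : σ →₀ ℕ => monomial b (1 : K)) := by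
    have h := (basisMonomials σ K).linearIndependent
    rwa [coe_basisMonomials] at h
  constructor
  · rw [iSupIndep_def]
    intro o
    have hsup : (⨆ j, ⨆ (_ : j ≠ o), Submodule.span K ((fun b => monomial b (1 : K)) '' Bs j))
        = Submodule.span K ((fun b => monomial b (1 : K)) '' (⋃ j, ⋃ (_ : j ≠ o), Bs j)) := by
      rw [Set.image_iUnion₂, Submodule.span_iUnion₂]
    rw [hsup]
    apply hli.disjoint_span_image
    rw [Set.disjoint_left]
    intro b hb hb'
    simp only [Set.mem_iUnion] at hb'
    obtain ⟨j, hj, hbj⟩ := hb'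
    obtain ⟨o', ho', huo⟩ := huniq b
    exact hj ((huo j hbj).trans (huo o hb).symm)
  · rw [← Submodule.span_iUnion, ← Set.image_iUnion]
    have hu : (⋃ o, Bs o) = Set.univ :=
      Set.eq_univ_of_forall fun b => Set.mem_iUnion.2 (huniq b).exists
    rw [hu, Set.image_univ]
    have h := (basisMonomials σ K).span_eq
    rwa [coe_basisMonomials] at h

end StanleyAux

/-- For monomials `m_i = monomial (a i) 1 ∈ S_i = K[x_i,…,x_n]`,
`1 ≤ i ≤ t ≤ n`, with `deg m_t > 0`, one has, as internal direct sum of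
`K`-subspaces of `S`:
`S = ⊕_{i=1}^{t} ⊕_{j=1}^{d_i} u_{ij} n_i K[Z_{ij}] ⊕ ⊕_{j=1}^{t-1} x_j n_{j+1} S_j ⊕ n_t m_t S_t`
(the summands of the last two blocks are `(ccGens j)·S_j`, `j = 1,…,t`, since
`ccGens j = x_j n_{j+1}` for `j < t` and `ccGens t = n_t m_t`, `S_t = K[x_t,…,x_n]`). -/
theorem full_polynomial_ring_decomposition
    {K : Type*} [Field K] {n t : ℕ} (ht1 : 1 ≤ t) (ht : t ≤ n)
    (a : Fin t → (Fin n →₀ ℕ))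
    (hm : ∀ i : Fin t, ↑(a i).support ⊆ {k : Fin n | (i : ℕ) ≤ (k : ℕ)})
    (hdeg : a ⟨t - 1, by omega⟩ ≠ 0) :
    -- `n_i = m₁ ⋯ m_{i-1}` (so `n_1 = 1`) :
    let nP : Fin t → MvPolynomial (Fin n) K := fun i => ∏ k ∈ Finset.Iio i, monomial (a k) 1
    -- `S_j = K[x_j,…,x_n]` as a `K`-subspace of `S` :
    let Si : ℕ → Submodule K (MvPolynomial (Fin n) K) := fun j =>
      Submodule.span K (monomialsIn K {k : Fin n | j ≤ (k : ℕ)})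
    -- the summands :
    let F : ((i : Fin t) × Fin (varList (a i)).length) ⊕ (Fin t) →
        Submodule K (MvPolynomial (Fin n) K) := fun o =>
      Sum.elim
        (fun p => stanleySpace K (nP p.1 * uPoly K (a p.1) p.2) (Zij (p.1 : ℕ) (a p.1) p.2))
        (fun j => Submodule.map
          (LinearMap.mulLeft K (ccGens K ht (fun i => monomial (a i) 1) j)) (Si (j : ℕ))) o
    iSupIndep F ∧ iSup F = ⊤ := by
  intro nP Si F
  classical
  -- the exponent vector of `n_i` (for `i : ℕ`, `i ≤ t`)
  let N : ℕ → (Fin n →₀ ℕ) := fun i =>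
    ∑ k ∈ Finset.univ.filter (fun k : Fin t => (k : ℕ) < i), a k
  -- the exponent vector of the generating monomial of each summand
  let E : ((i : Fin t) × Fin (varList (a i)).length) ⊕ (Fin t) → (Fin n →₀ ℕ) := fun o =>
    Sum.elim
      (fun p : (i : Fin t) × Fin (varList (a i)).length =>
        N (p.1 : ℕ) + Multiset.toFinsupp (((varList (a p.1)).take (p.2 : ℕ) : List (Fin n)) :
          Multiset (Fin n)))
      (fun j : Fin t =>
        (if (j : ℕ) < t - 1 then Finsupp.single (Fin.castLE ht j) 1 else 0) + N ((j : ℕ) + 1)) o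
  -- the variable sets of the summands
  let Zs : ((i : Fin t) × Fin (varList (a i)).length) ⊕ (Fin t) → Set (Fin n) := fun o =>
    Sum.elim (fun p : (i : Fin t) × Fin (varList (a i)).length => Zij (p.1 : ℕ) (a p.1) p.2)
      (fun j : Fin t => {k : Fin n | (j : ℕ) ≤ (k : ℕ)}) o
  -- the exponent sets of the summands
  let Bs : ((i : Fin t) × Fin (varList (a i)).length) ⊕ (Fin t) → Set (Fin n →₀ ℕ) := fun o =>
    (E o + ·) '' {c : Fin n →₀ ℕ | ↑c.support ⊆ Zs o}
  -- basic facts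
  have ha0 : ∀ (k : Fin t) (x : Fin n), (x : ℕ) < (k : ℕ) → a k x = 0 := by
    intro k x hx
    by_contra hne
    have := hm k (Finsupp.mem_support_iff.2 hne)
    simp only [Set.mem_setOf_eq] at this
    omega
  have hNa : ∀ (i : ℕ) (x : Fin n),
      N i x = ∑ k ∈ Finset.univ.filter (fun k : Fin t => (k : ℕ) < i), a k x := by
    intro i x
    show (∑ k ∈ Finset.univ.filter (fun k : Fin t => (k : ℕ) < i), a k) x = _
    rw [Finsupp.finset_sum_apply]
  have hNmono : ∀ {i i' : ℕ}, i ≤ i' → ∀ x : Fin n, N i x ≤ N i' x := by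
    intro i i' h x
    rw [hNa, hNa]
    apply Finset.sum_le_sum_of_subset
    intro k hk
    simp only [Finset.mem_filter, Finset.mem_univ, true_and] at hk ⊢
    omega
  have hNsucc : ∀ (i : Fin t) (x : Fin n), N ((i : ℕ) + 1) x = N (i : ℕ) x + a i x := by
    intro i x
    rw [hNa, hNa]
    have hins : Finset.univ.filter (fun k : Fin t => (k : ℕ) < (i : ℕ) + 1)
        = insert i (Finset.univ.filter (fun k : Fin t => (k : ℕ) < (i : ℕ))) := by
      ext k
      simp only [Finset.mem_filter, Finset.mem_univ, true_and, Finset.mem_insert, Fin.ext_iff]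
      omega
    rw [hins, Finset.sum_insert (by simp)]
    omega
  have hNstab : ∀ (x : Fin n) {i i' : ℕ}, (x : ℕ) < i → i ≤ i' → N i' x = N i x := by
    intro x i i' hxi hii'
    rw [hNa, hNa]
    symm
    apply Finset.sum_subset
    · intro k hk
      simp only [Finset.mem_filter, Finset.mem_univ, true_and] at hk ⊢
      omega
    · intro k hk hnk
      simp only [Finset.mem_filter, Finset.mem_univ, true_and] at hk hnk
      exact ha0 k x (by omega)
  have hcount : ∀ (i : Fin t) (x : Fin n), (varList (a i)).count x = a i x := by
    intro i x
    have hsort : ((varList (a i) : List (Fin n)) : Multiset (Fin n)) = Finsupp.toMultiset (a i) :=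
      Multiset.sort_eq _ _
    rw [← Multiset.coe_count, hsort, Finsupp.count_toMultiset]
  have hEinl : ∀ (p : (i : Fin t) × Fin (varList (a i)).length) (x : Fin n),
      E (Sum.inl p) x = N (p.1 : ℕ) x + ((varList (a p.1)).take (p.2 : ℕ)).count x := by
    intro p x
    show (N (p.1 : ℕ) + Multiset.toFinsupp (((varList (a p.1)).take (p.2 : ℕ) : List (Fin n)) :
        Multiset (Fin n))) x = _
    rw [Finsupp.add_apply, Multiset.toFinsupp_apply, Multiset.coe_count]
  have hEinrlt : ∀ (j : Fin t), (j : ℕ) < t - 1 → ∀ x : Fin n,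
      E (Sum.inr j) x = (if (j : ℕ) = (x : ℕ) then 1 else 0) + N ((j : ℕ) + 1) x := by
    intro j hj x
    show (((if (j : ℕ) < t - 1 then Finsupp.single (Fin.castLE ht j) 1 else 0)
        + N ((j : ℕ) + 1) : Fin n →₀ ℕ)) x = _
    rw [if_pos hj, Finsupp.add_apply, Finsupp.single_apply]
    congr 1
    simp [Fin.ext_iff]
  have hEinrge : ∀ (j : Fin t), ¬((j : ℕ) < t - 1) → ∀ x : Fin n,
      E (Sum.inr j) x = N ((j : ℕ) + 1) x := by
    intro j hj x
    show (((if (j : ℕ) < t - 1 then Finsupp.single (Fin.castLE ht j) 1 else 0)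
        + N ((j : ℕ) + 1) : Fin n →₀ ℕ)) x = _
    rw [if_neg hj, zero_add]
  have hZinl : ∀ (i : Fin t) (j : Fin (varList (a i)).length) (x : Fin n),
      x ∉ Zs (Sum.inl ⟨i, j⟩) ↔ ((x : ℕ) < (i : ℕ) ∨ x = (varList (a i)).get j) := by
    intro i j x
    show x ∉ ({k : Fin n | (i : ℕ) ≤ (k : ℕ)} \ {(varList (a i)).get j}) ↔ _
    simp only [Set.mem_diff, Set.mem_setOf_eq, Set.mem_singleton_iff, not_and, not_not]
    constructor
    · intro h
      by_cases hxg : x = (varList (a i)).get j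
      · exact Or.inr hxg
      · left
        by_contra hcon
        exact hxg (h (by omega))
    · rintro (hx | hx) h1
      · omega
      · exact hx
  have hZinr : ∀ (j : Fin t) (x : Fin n), x ∉ Zs (Sum.inr j) ↔ (x : ℕ) < (j : ℕ) := by
    intro j x
    show x ∉ {k : Fin n | (j : ℕ) ≤ (k : ℕ)} ↔ _
    simp only [Set.mem_setOf_eq, not_le]
  have hmem : ∀ (o : ((i : Fin t) × Fin (varList (a i)).length) ⊕ (Fin t)) (b : Fin n →₀ ℕ),
      b ∈ Bs o ↔ (∀ x, E o x ≤ b x) ∧ ∀ x ∉ Zs o, b x = E o x := fun o b =>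
    StanleyAux.mem_shift_iff (E o) b (Zs o)
  -- Step A : each summand is the span of the monomials with exponents in `Bs o`
  have hFeq : ∀ o, F o = Submodule.span K ((fun b => monomial b (1 : K)) '' Bs o) := by
    rintro (p | j)
    · have hIio : ∑ k ∈ Finset.Iio p.1, a k = N (p.1 : ℕ) := by
        apply Finset.sum_congr _ fun _ _ => rfl
        ext k
        simp only [Finset.mem_Iio, Finset.mem_filter, Finset.mem_univ, true_and, Fin.lt_def]
      have hmono : nP p.1 * uPoly K (a p.1) (p.2 : ℕ) = monomial (E (Sum.inl p)) (1 : K) := by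
        show (∏ k ∈ Finset.Iio p.1, monomial (a k) (1 : K)) * uPoly K (a p.1) (p.2 : ℕ) = _
        unfold uPoly
        rw [StanleyAux.prod_monomial, StanleyAux.listProd_X, monomial_mul, mul_one, hIio]
        rfl
      show stanleySpace K (nP p.1 * uPoly K (a p.1) (p.2 : ℕ)) (Zij (p.1 : ℕ) (a p.1) p.2) = _
      unfold stanleySpace
      rw [hmono, StanleyAux.image_mul_monomialsIn]
      rfl
    · have hIic : ∑ k ∈ Finset.Iic j, a k = N ((j : ℕ) + 1) := by
        apply Finset.sum_congr _ fun _ _ => rfl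
        ext k
        simp only [Finset.mem_Iic, Finset.mem_filter, Finset.mem_univ, true_and, Fin.le_def,
          Nat.lt_succ_iff]
      have hcc : ccGens K ht (fun i => monomial (a i) 1) j = monomial (E (Sum.inr j)) (1 : K) := by
        unfold ccGens
        rw [StanleyAux.prod_monomial, hIic]
        show _ = monomial
          ((if (j : ℕ) < t - 1 then Finsupp.single (Fin.castLE ht j) 1 else 0) + N ((j : ℕ) + 1)) 1
        by_cases hj : (j : ℕ) < t - 1
        · rw [if_pos hj, if_pos hj, X, monomial_mul, one_mul]
        · rw [if_neg hj, if_neg hj, one_mul, zero_add]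
      show Submodule.map (LinearMap.mulLeft K (ccGens K ht (fun i => monomial (a i) 1) j))
        (Si (j : ℕ)) = _
      rw [hcc]
      show Submodule.map _ (Submodule.span K (monomialsIn K {k : Fin n | (j : ℕ) ≤ (k : ℕ)})) = _
      rw [Submodule.map_span]
      have himg : ⇑(LinearMap.mulLeft K (monomial (E (Sum.inr j)) (1 : K)))
          = ((monomial (E (Sum.inr j)) (1 : K)) * ·) := by
        funext q
        simp
      rw [himg, StanleyAux.image_mul_monomialsIn]
      rfl
  -- Step B : the exponent sets partition all of `Fin n →₀ ℕ`
  have hpart : ∀ b : Fin n →₀ ℕ, ∃! o, b ∈ Bs o := by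
    intro b
    let D : ℕ → Prop := fun i =>
      (∀ x : Fin n, N i x ≤ b x) ∧ (∀ x : Fin n, (x : ℕ) < i → b x = N i x)
    have hN0 : ∀ x : Fin n, N 0 x = 0 := by
      intro x
      rw [hNa]
      simp
    have hD0 : D 0 := ⟨fun x => by rw [hN0]; omega, fun x hx => absurd hx (by omega)⟩
    letI : DecidablePred D := fun _ => Classical.propDecidable _
    set i0 := Nat.findGreatest D (t - 1) with hi0def
    have hi0le : i0 ≤ t - 1 := Nat.findGreatest_le _
    have hi0t : i0 < t := by omega
    have hDi0 : D i0 := Nat.findGreatest_spec (Nat.zero_le _) hD0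
    have hmax : ∀ m, m ≤ t - 1 → D m → m ≤ i0 := fun m h1 h2 => Nat.le_findGreatest h1 h2
    -- inversion for the first kind of summands
    have hinv_inl : ∀ (i : Fin t) (j : Fin (varList (a i)).length),
        b ∈ Bs (Sum.inl ⟨i, j⟩) →
        (i : ℕ) = i0 ∧ ¬(∀ x, N ((i : ℕ) + 1) x ≤ b x) ∧
        (∀ x, ((varList (a i)).take (j : ℕ)).count x ≤ b x - N (i : ℕ) x) ∧
        b ((varList (a i)).get j) - N (i : ℕ) ((varList (a i)).get j)
          = ((varList (a i)).take (j : ℕ)).count ((varList (a i)).get j) := by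
      intro i j hb
      obtain ⟨h1, h2⟩ := (hmem _ b).1 hb
      have h1' : ∀ x, N (i : ℕ) x + ((varList (a i)).take (j : ℕ)).count x ≤ b x := by
        intro x
        have := h1 x
        rwa [hEinl ⟨i, j⟩ x] at this
      have h2' : ∀ x : Fin n, ((x : ℕ) < (i : ℕ) ∨ x = (varList (a i)).get j) →
          b x = N (i : ℕ) x + ((varList (a i)).take (j : ℕ)).count x := by
        intro x hx
        have := h2 x ((hZinl i j x).2 hx)
        rwa [hEinl ⟨i, j⟩ x] at this
      have hcnt0 : ∀ x : Fin n, (x : ℕ) < (i : ℕ) →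
          ((varList (a i)).take (j : ℕ)).count x = 0 := by
        intro x hx
        have hle := StanleyAux.count_take_le (varList (a i)) (j : ℕ) x
        rw [hcount] at hle
        have := ha0 i x hx
        omega
      have hDi : D (i : ℕ) := by
        refine ⟨fun x => le_trans (Nat.le_add_right _ _) (h1' x), fun x hx => ?_⟩
        rw [h2' x (Or.inl hx), hcnt0 x hx]
        omega
      have hbget := h2' ((varList (a i)).get j) (Or.inr rfl)
      have hrget : b ((varList (a i)).get j) - N (i : ℕ) ((varList (a i)).get j)
          = ((varList (a i)).take (j : ℕ)).count ((varList (a i)).get j) := by omega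
      have hlt : b ((varList (a i)).get j) - N (i : ℕ) ((varList (a i)).get j)
          < (varList (a i)).count ((varList (a i)).get j) :=
        StanleyAux.cut_lt (varList (a i)) (fun x => b x - N (i : ℕ) x) j hrget
      rw [hcount] at hlt
      have hndiv : ¬(∀ x, N ((i : ℕ) + 1) x ≤ b x) := by
        intro hdd
        have h3 := hdd ((varList (a i)).get j)
        rw [hNsucc] at h3
        omega
      have hile : (i : ℕ) ≤ i0 := hmax _ (by omega) hDi
      have hige : ¬((i : ℕ) < i0) := by
        intro hlt'
        exact hndiv fun x => le_trans (hNmono (by omega) x) (hDi0.1 x)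
      exact ⟨by omega, hndiv, fun x => by have := h1' x; omega, hrget⟩
    -- inversion for the second kind of summands
    have hinv_inr : ∀ j : Fin t, b ∈ Bs (Sum.inr j) →
        (j : ℕ) = i0 ∧ ∀ x, N ((j : ℕ) + 1) x ≤ b x := by
      intro j hb
      obtain ⟨h1, h2⟩ := (hmem _ b).1 hb
      by_cases hj : (j : ℕ) < t - 1
      · have h1' : ∀ x : Fin n,
            (if (j : ℕ) = (x : ℕ) then 1 else 0) + N ((j : ℕ) + 1) x ≤ b x := by
          intro x
          have := h1 x
          rwa [hEinrlt j hj x] at this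
        have h2' : ∀ x : Fin n, (x : ℕ) < (j : ℕ) → b x = N ((j : ℕ) + 1) x := by
          intro x hx
          have := h2 x ((hZinr j x).2 hx)
          rwa [hEinrlt j hj x, if_neg (by omega), zero_add] at this
        have hdivj : ∀ x, N ((j : ℕ) + 1) x ≤ b x := by
          intro x
          have := h1' x
          omega
        have hDj : D (j : ℕ) := by
          refine ⟨fun x => le_trans (hNmono (Nat.le_succ _) x) (hdivj x), fun x hx => ?_⟩
          rw [h2' x hx, hNstab x hx (Nat.le_succ _)]
        have hxtra : N ((j : ℕ) + 1) (Fin.castLE ht j) < b (Fin.castLE ht j) := by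
          have := h1' (Fin.castLE ht j)
          rw [if_pos (by simp)] at this
          omega
        have hjle : (j : ℕ) ≤ i0 := hmax _ (by omega) hDj
        have : ¬((j : ℕ) < i0) := by
          intro hlt'
          have hb1 : b (Fin.castLE ht j) = N i0 (Fin.castLE ht j) :=
            hDi0.2 (Fin.castLE ht j) (by simpa using hlt')
          have hb2 : N i0 (Fin.castLE ht j) = N ((j : ℕ) + 1) (Fin.castLE ht j) :=
            hNstab (Fin.castLE ht j) (by simp) (by omega)
          omega
        exact ⟨by omega, hdivj⟩
      · have hjeq : (j : ℕ) = t - 1 := by have := j.isLt; omega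
        have h1' : ∀ x : Fin n, N ((j : ℕ) + 1) x ≤ b x := by
          intro x
          have := h1 x
          rwa [hEinrge j hj x] at this
        have h2' : ∀ x : Fin n, (x : ℕ) < (j : ℕ) → b x = N ((j : ℕ) + 1) x := by
          intro x hx
          have := h2 x ((hZinr j x).2 hx)
          rwa [hEinrge j hj x] at this
        have hDj : D (j : ℕ) := by
          refine ⟨fun x => le_trans (hNmono (Nat.le_succ _) x) (h1' x), fun x hx => ?_⟩
          rw [h2' x hx, hNstab x hx (Nat.le_succ _)]
        have hjle : (j : ℕ) ≤ i0 := hmax _ (by omega) hDj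
        exact ⟨by omega, h1'⟩
    -- now construct the unique summand containing `b`
    by_cases hdiv : ∀ x, N (i0 + 1) x ≤ b x
    · by_cases hlast : i0 = t - 1
      · -- the block `n_t m_t S_t`
        refine ⟨Sum.inr ⟨t - 1, by omega⟩, ?_, ?_⟩
        · refine (hmem _ b).2 ⟨fun x => ?_, fun x hx => ?_⟩
          · rw [hEinrge ⟨t - 1, by omega⟩ (by simp) x]
            have := hdiv x
            rwa [hlast] at this
          · rw [hZinr] at hx
            rw [hEinrge ⟨t - 1, by omega⟩ (by simp) x,
              hNstab x (by simpa using hx) (Nat.le_succ _)]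
            have := hDi0.2 x (by simp at hx; omega)
            rwa [hlast] at this
        · rintro (⟨i, j⟩ | j) hb
          · obtain ⟨hi, hnd, -, -⟩ := hinv_inl i j hb
            exact absurd (fun x => by rw [hi]; exact hdiv x) hnd
          · obtain ⟨hj0, -⟩ := hinv_inr j hb
            exact congrArg Sum.inr (Fin.ext (by simp; omega))
      · -- the block `x_{i0} n_{i0+1} S_{i0}`
        have hi0lt : i0 < t - 1 := by omega
        have hxtra : N (i0 + 1) (Fin.castLE ht ⟨i0, hi0t⟩) < b (Fin.castLE ht ⟨i0, hi0t⟩) := by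
          by_contra hcon
          push_neg at hcon
          have hD1 : D (i0 + 1) := by
            refine ⟨fun x => by have := hdiv x; omega, fun x hx => ?_⟩
            by_cases hxi : (x : ℕ) < i0
            · rw [hDi0.2 x hxi]
              exact (hNstab x hxi (Nat.le_succ _)).symm
            · have hxeq : x = Fin.castLE ht ⟨i0, hi0t⟩ :=
                Fin.ext (by simp only [Fin.coe_castLE, Fin.val_mk]; omega)
              rw [hxeq]
              exact le_antisymm hcon (hdiv _)
          have := hmax (i0 + 1) (by omega) hD1
          omega
        refine ⟨Sum.inr ⟨i0, hi0t⟩, ?_, ?_⟩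
        · refine (hmem _ b).2 ⟨fun x => ?_, fun x hx => ?_⟩
          · rw [hEinrlt ⟨i0, hi0t⟩ (by simpa using hi0lt) x]
            by_cases hxi : ((⟨i0, hi0t⟩ : Fin t) : ℕ) = (x : ℕ)
            · rw [if_pos hxi]
              have hxeq : x = Fin.castLE ht ⟨i0, hi0t⟩ := Fin.ext (by simpa using hxi.symm)
              rw [hxeq]
              have := hxtra
              simp only [Fin.val_mk] at this ⊢
              omega
            · rw [if_neg hxi, zero_add]
              have := hdiv x
              simpa using this
          · rw [hZinr] at hx
            rw [hEinrlt ⟨i0, hi0t⟩ (by simpa using hi0lt) x, if_neg (by omega), zero_add]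
            have h3 : N (((⟨i0, hi0t⟩ : Fin t) : ℕ) + 1) x = N i0 x :=
              hNstab x (by simpa using hx) (by simp)
            rw [h3]
            exact hDi0.2 x (by simpa using hx)
        · rintro (⟨i, j⟩ | j) hb
          · obtain ⟨hi, hnd, -, -⟩ := hinv_inl i j hb
            exact absurd (fun x => by rw [hi]; exact hdiv x) hnd
          · obtain ⟨hj0, -⟩ := hinv_inr j hb
            exact congrArg Sum.inr (Fin.ext (by simpa using hj0))
    · -- the blocks `u_{ij} n_i K[Z_{ij}]`
      push_neg at hdiv
      obtain ⟨x0, hx0⟩ := hdiv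
      have hx0' : b x0 - N i0 x0 < (varList (a ⟨i0, hi0t⟩)).count x0 := by
        rw [hcount]
        have h1 := hNsucc ⟨i0, hi0t⟩ x0
        simp only [Fin.val_mk] at h1
        have h2 := hDi0.1 x0
        omega
      obtain ⟨j0, ⟨hj1, hj2⟩, hjU⟩ :=
        StanleyAux.existsUnique_cut (varList (a ⟨i0, hi0t⟩)) (fun x => b x - N i0 x) ⟨x0, hx0'⟩
      refine ⟨Sum.inl ⟨⟨i0, hi0t⟩, j0⟩, ?_, ?_⟩
      · refine (hmem _ b).2 ⟨fun x => ?_, fun x hx => ?_⟩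
        · rw [hEinl ⟨⟨i0, hi0t⟩, j0⟩ x]
          have h3 := hj1 x
          have h4 := hDi0.1 x
          simp only [Fin.val_mk]
          omega
        · rw [hZinl] at hx
          rw [hEinl ⟨⟨i0, hi0t⟩, j0⟩ x]
          simp only [Fin.val_mk] at hx ⊢
          rcases hx with hx | hx
          · have hc0 : ((varList (a ⟨i0, hi0t⟩)).take (j0 : ℕ)).count x = 0 := by
              have hle := StanleyAux.count_take_le (varList (a ⟨i0, hi0t⟩)) (j0 : ℕ) x
              rw [hcount] at hle
              have := ha0 ⟨i0, hi0t⟩ x (by simpa using hx)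
              omega
            rw [hc0, hDi0.2 x hx]
            omega
          · rw [hx]
            have h3 := hDi0.1 ((varList (a ⟨i0, hi0t⟩)).get j0)
            omega
      · rintro (⟨i, j⟩ | j) hb
        · obtain ⟨hi, -, hr1, hr2⟩ := hinv_inl i j hb
          have hieq : i = (⟨i0, hi0t⟩ : Fin t) := Fin.ext (by simpa using hi)
          subst hieq
          have hjeq : j = j0 := by
            apply hjU
            exact ⟨fun x => by have := hr1 x; simpa using this,
              by have := hr2; simpa using this⟩
          rw [hjeq]
        · obtain ⟨hj0, hdivj⟩ := hinv_inr j hb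
          have := hdivj x0
          rw [hj0] at this
          omega
  -- conclusion
  obtain ⟨hind, htop⟩ := StanleyAux.indep_top (K := K) Bs hpart
  have hFB : F = fun o => Submodule.span K ((fun b => monomial b (1 : K)) '' Bs o) :=
    funext hFeq
  rw [hFB]
  exact ⟨hind, htop⟩
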